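/- Let K be an infinite field, n ≥ 5 and 1 < r < n − 2 integers. Then for p(x,y) = [x,y]^r, the image p(T_n(K)) is strictly contained in T_n(K)^{(r−1)}; in particular, the matrix e_{1,r+1} + e_{3,r+3} belongs to T_n(K)^{(r−1)} but not to p(T_n(K)). -/

import Mathlib

/-- `A` is upper triangular. -/
def UT {K : Type*} [Field K] {n : ℕ} (A : Matrix (Fin n) (Fin n) K) : Prop :=
  ∀ i j : Fin n, (j : ℕ) < (i : ℕ) → A i j = 0

lemma sut_pow_lt {K : Type*} [Field K] {n : ℕ} {C : Matrix (Fin n) (Fin n) K}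
    (hC : ∀ i j : Fin n, (j : ℕ) ≤ (i : ℕ) → C i j = 0) :
    ∀ r (i j : Fin n), (j : ℕ) < (i : ℕ) + r → (C ^ r) i j = 0 := by
  intro r
  induction r with
  | zero =>
    intro i j h
    rw [pow_zero]
    exact Matrix.one_apply_ne (Fin.ne_of_val_ne (by omega))
  | succ r ih =>
    intro i j h
    rw [pow_succ, Matrix.mul_apply]
    apply Finset.sum_eq_zero
    intro k _
    by_cases hk : (k : ℕ) < (i : ℕ) + r
    · rw [ih i k hk, zero_mul]
    · rw [hC k j (by omega), mul_zero]

lemma sut_pow_diag {K : Type*} [Field K] {n : ℕ} {C : Matrix (Fin n) (Fin n) K}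
    (hC : ∀ i j : Fin n, (j : ℕ) ≤ (i : ℕ) → C i j = 0) :
    ∀ r (i j : Fin n) (h : (j : ℕ) = (i : ℕ) + r),
      (C ^ r) i j = ∏ k : Fin r,
        C ⟨i + k, by omega⟩ ⟨i + k + 1, by omega⟩ := by
  intro r
  induction r with
  | zero =>
    intro i j h
    obtain rfl : i = j := Fin.ext (by omega)
    rw [pow_zero]
    simp
  | succ r ih =>
    intro i j h
    rw [pow_succ, Matrix.mul_apply]
    rw [Finset.sum_eq_single (⟨(i : ℕ) + r, by omega⟩ : Fin n)]
    · rw [ih i ⟨(i : ℕ) + r, by omega⟩ rfl, Fin.prod_univ_castSucc]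
      have hjj : j = ⟨(i : ℕ) + r + 1, by have := j.isLt; omega⟩ := Fin.ext h
      refine congrArg₂ (· * ·) rfl ?_
      exact congrArg _ hjj
    · intro k _ hk
      by_cases hk' : (k : ℕ) < (i : ℕ) + r
      · rw [sut_pow_lt hC r i k hk', zero_mul]
      · rw [hC k j (by simp [Fin.ext_iff] at hk; omega), mul_zero]
    · intro hmem
      exact absurd (Finset.mem_univ _) hmem

theorem stmt_13 {K : Type*} [Field K] [Infinite K] (n r : ℕ) (hn : 5 ≤ n)
    (hr1 : 1 < r) (hr2 : r < n - 2) :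
    (∀ i j : Fin n, (j : ℕ) < (i : ℕ) + r →
      (Matrix.single (⟨0, by omega⟩ : Fin n) (⟨r, by omega⟩ : Fin n) (1 : K) +
        Matrix.single (⟨2, by omega⟩ : Fin n) (⟨r + 2, by omega⟩ : Fin n) (1 : K))
        i j = 0) ∧
    ∀ A B : Matrix (Fin n) (Fin n) K, UT A → UT B →
      (A * B - B * A) ^ r ≠
        Matrix.single (⟨0, by omega⟩ : Fin n) (⟨r, by omega⟩ : Fin n) (1 : K) +
          Matrix.single (⟨2, by omega⟩ : Fin n) (⟨r + 2, by omega⟩ : Fin n) (1 : K) := by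
  constructor
  · intro i j hij
    simp only [Matrix.add_apply, Matrix.single, Matrix.of_apply]
    rw [if_neg, if_neg, add_zero]
    · rintro ⟨h1, h2⟩
      rw [Fin.ext_iff] at h1 h2
      simp at h1 h2
      omega
    · rintro ⟨h1, h2⟩
      rw [Fin.ext_iff] at h1 h2
      simp at h1 h2
      omega
  · intro A B hA hB heq
    set C := A * B - B * A with hCdef
    have hC : ∀ i j : Fin n, (j : ℕ) ≤ (i : ℕ) → C i j = 0 := by
      intro i j hij
      rw [hCdef]
      simp only [Matrix.sub_apply, Matrix.mul_apply]
      rw [sub_eq_zero]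
      apply Finset.sum_congr rfl
      intro k _
      by_cases h1 : (k : ℕ) < (i : ℕ)
      · rw [hA i k h1, hB i k h1, zero_mul, zero_mul]
      · by_cases h2 : (j : ℕ) < (k : ℕ)
        · rw [hA k j h2, hB k j h2, mul_zero, mul_zero]
        · obtain rfl : i = k := Fin.ext (by omega)
          obtain rfl : j = i := Fin.ext (by omega)
          exact mul_comm _ _
    -- evaluate at (0, r), (1, r+1), (2, r+2)
    have ev : ∀ (a b : ℕ) (ha : a < n) (hb : b < n),
        (C ^ r) ⟨a, ha⟩ ⟨b, hb⟩ =
        (Matrix.single (⟨0, by omega⟩ : Fin n) (⟨r, by omega⟩ : Fin n) (1 : K) +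
          Matrix.single (⟨2, by omega⟩ : Fin n) (⟨r + 2, by omega⟩ : Fin n) (1 : K))
          ⟨a, ha⟩ ⟨b, hb⟩ := by
      intro a b ha hb; rw [heq]
    have P0 : (∏ k : Fin r, C ⟨0 + (k : ℕ), by omega⟩ ⟨0 + (k : ℕ) + 1, by omega⟩) = 1 := by
      have := ev 0 r (by omega) (by omega)
      rw [sut_pow_diag hC r ⟨0, by omega⟩ ⟨r, by omega⟩ (by simp)] at this
      rw [this]
      simp [Matrix.single, Fin.ext_iff]
    have P2 : (∏ k : Fin r, C ⟨2 + (k : ℕ), by omega⟩ ⟨2 + (k : ℕ) + 1, by omega⟩) = 1 := by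
      have := ev 2 (r + 2) (by omega) (by omega)
      rw [sut_pow_diag hC r ⟨2, by omega⟩ ⟨r + 2, by omega⟩ (by simp; omega)] at this
      rw [this]
      simp [Matrix.single, Fin.ext_iff]
    have P1 : (∏ k : Fin r, C ⟨1 + (k : ℕ), by omega⟩ ⟨1 + (k : ℕ) + 1, by omega⟩) = 0 := by
      have := ev 1 (r + 1) (by omega) (by omega)
      rw [sut_pow_diag hC r ⟨1, by omega⟩ ⟨r + 1, by omega⟩ (by simp; omega)] at this
      rw [this]
      simp [Matrix.single, Fin.ext_iff]
    obtain ⟨k, -, hk0⟩ := Finset.prod_eq_zero_iff.mp P1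
    by_cases hk : (k : ℕ) + 1 < r
    · -- factor in P0 at index k+1
      refine one_ne_zero (α := K) ?_
      rw [← P0]
      apply Finset.prod_eq_zero (Finset.mem_univ (⟨(k : ℕ) + 1, hk⟩ : Fin r))
      convert hk0 using 2 <;> simp <;> omega
    · -- k = r - 1; factor in P2 at index r - 2
      have hr2' : r - 2 < r := by omega
      refine one_ne_zero (α := K) ?_
      rw [← P2]
      apply Finset.prod_eq_zero (Finset.mem_univ (⟨r - 2, hr2'⟩ : Fin r))
      have hkr : (k : ℕ) = r - 1 := by have := k.isLt; omega
      convert hk0 using 2 <;> simp <;> omega
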